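/- arXiv:2108.06993 — 4 statements merged into one kernel-verified Lean document; each statement's English description precedes it below -/
import Mathlib

section
/- Let H be a ℙ-subnormal subgroup of a finite group G and let r be the largest prime dividing the order of G. Then O_r(H) ≤ O_r(G). -/
open Subgroup
open scoped Pointwise MatrixGroups

/-- `H` is ℙ-subnormal in `G`: there is a chain of subgroups from `H` to `G`
in which each successive index is a prime or `1`. -/
def IsPSubnormal {G : Type*} [Group G] (H : Subgroup G) : Prop :=
  ∃ (n : ℕ) (c : ℕ → Subgroup G),
    c 0 = H ∧ c n = ⊤ ∧
    ∀ i < n, c i ≤ c (i + 1) ∧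
      (((c i).relIndex (c (i + 1))).Prime ∨ (c i).relIndex (c (i + 1)) = 1)

/-- The permutizer `P_G(H)`: the subgroup generated by all `x ∈ G` whose cyclic
subgroup permutes with `H`. -/
def permutizer {G : Type*} [Group G] (H : Subgroup G) : Subgroup G :=
  Subgroup.closure
    {x : G | (Subgroup.zpowers x : Set G) * (H : Set G)
           = (H : Set G) * (Subgroup.zpowers x : Set G)}

/-- `H` is permutable in `G` if `P_G(H) = G`. -/
def IsPermutable {G : Type*} [Group G] (H : Subgroup G) : Prop :=
  permutizer H = ⊤

/-- `H` is strongly permutable in `G` if `P_U(H) = U` for every `H ≤ U ≤ G`. -/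
def IsStronglyPermutable {G : Type*} [Group G] (H : Subgroup G) : Prop :=
  ∀ U : Subgroup G, H ≤ U → permutizer (H.subgroupOf U) = ⊤

/-- A group is supersoluble if it has a normal series all of whose factors are cyclic. -/
def IsSupersoluble (G : Type*) [Group G] : Prop :=
  ∃ (n : ℕ) (c : ℕ → Subgroup G) (hnorm : ∀ i, (c i).Normal),
    c 0 = ⊥ ∧ c n = ⊤ ∧
    ∀ i < n, c i ≤ c (i + 1) ∧
      (letI := hnorm i
       IsCyclic ((c (i + 1)).map (QuotientGroup.mk' (c i))))

/-- A Schmidt group: a non-nilpotent group all of whose proper subgroups are nilpotent. -/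
def IsSchmidt (G : Type*) [Group G] : Prop :=
  ¬ Group.IsNilpotent G ∧ ∀ H : Subgroup G, H ≠ ⊤ → Group.IsNilpotent H

/-- The `p`-core `O_p(G)`: the largest normal `p`-subgroup of `G` (the join of all
normal `p`-subgroups). -/
def pCore (p : ℕ) (G : Type*) [Group G] : Subgroup G :=
  ⨆ (N : Subgroup G) (_ : N.Normal) (_ : IsPGroup p N), N

section PCoreAux

variable {p : ℕ} {G : Type*} [Group G]

theorem le_pCore {N : Subgroup G} (hN : N.Normal) (hP : IsPGroup p N) : N ≤ pCore p G :=
  le_iSup_of_le N (le_iSup_of_le hN (le_iSup_of_le hP le_rfl))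

theorem pCore_le {X : Subgroup G} (h : ∀ N : Subgroup G, N.Normal → IsPGroup p N → N ≤ X) :
    pCore p G ≤ X :=
  iSup_le fun N => iSup_le fun hN => iSup_le fun hP => h N hN hP

theorem pCore_map_equiv_le {G' : Type*} [Group G'] (e : G ≃* G') :
    (pCore p G).map e.toMonoidHom ≤ pCore p G' := by
  rw [map_le_iff_le_comap]
  refine pCore_le fun N hN hPN => ?_
  rw [← map_le_iff_le_comap]
  exact le_pCore (hN.map e.toMonoidHom e.surjective) (hPN.map _)

theorem pCore_map_equiv {G' : Type*} [Group G'] (e : G ≃* G') :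
    (pCore p G).map e.toMonoidHom = pCore p G' := by
  refine le_antisymm (pCore_map_equiv_le e) ?_
  have := Subgroup.map_mono (f := e.toMonoidHom) (pCore_map_equiv_le (p := p) e.symm)
  have h3 : e.toMonoidHom.comp e.symm.toMonoidHom = MonoidHom.id G' := by
    ext x; simp
  rwa [map_map, h3, map_id] at this

theorem pCore_mem (p : ℕ) (G : Type*) [Group G] [Finite G] :
    (pCore p G).Normal ∧ IsPGroup p (pCore p G) := by
  set s : Set (Subgroup G) := {N | N.Normal ∧ IsPGroup p N} with hs
  have hbot : (⊥ : Subgroup G) ∈ s := ⟨inferInstance, IsPGroup.of_bot⟩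
  obtain ⟨M, hMs, hmax⟩ := Set.Finite.exists_maximalFor id s (Set.toFinite s) ⟨⊥, hbot⟩
  have hMle : M ≤ pCore p G := le_pCore hMs.1 hMs.2
  have hle : pCore p G ≤ M := by
    refine pCore_le fun N hN hPN => ?_
    have hsup : N ⊔ M ∈ s := by
      haveI := hN; haveI := hMs.1
      exact ⟨Subgroup.sup_normal N M, IsPGroup.to_sup_of_normal_right hPN hMs.2⟩
    have := hmax hsup le_sup_right
    exact le_sup_left.trans this
  have : pCore p G = M := le_antisymm hle hMle
  rw [this]; exact hMs

theorem pCore_normal (p : ℕ) (G : Type*) [Group G] [Finite G] : (pCore p G).Normal :=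
  (pCore_mem p G).1

theorem pCore_isPGroup (p : ℕ) (G : Type*) [Group G] [Finite G] : IsPGroup p (pCore p G) :=
  (pCore_mem p G).2

theorem pCore_map_subtype_le_of_normal {L : Type*} [Group L] [Finite L] {p : ℕ}
    (D : Subgroup L) [D.Normal] :
    (pCore p D).map D.subtype ≤ pCore p L := by
  refine le_pCore ?_ ((pCore_isPGroup p D).map _)
  constructor
  intro x hx g
  obtain ⟨d, hd, rfl⟩ := hx
  have hmem : (MulAut.conjNormal g) d ∈ pCore p D := by
    rw [← pCore_map_equiv (p := p) ((MulAut.conjNormal g : MulAut D) : D ≃* D)]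
    exact Subgroup.mem_map_of_mem _ hd
  refine ⟨_, hmem, ?_⟩
  simp [MulAut.conjNormal_apply]

theorem normalCore_index_dvd_factorial {L : Type*} [Group L] [Finite L] (K : Subgroup L) :
    K.normalCore.index ∣ Nat.factorial K.index := by
  classical
  rw [Subgroup.normalCore_eq_ker, Subgroup.index_ker]
  have h1 : Nat.card (MulAction.toPermHom L (L ⧸ K)).range ∣ Nat.card (Equiv.Perm (L ⧸ K)) :=
    Subgroup.card_subgroup_dvd_card _
  have : Fintype (L ⧸ K) := Fintype.ofFinite _
  have h2 : Nat.card (Equiv.Perm (L ⧸ K)) = Nat.factorial (Nat.card (L ⧸ K)) := by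
    simp [Nat.card_eq_fintype_card, Fintype.card_perm]
  rw [h2] at h1
  rwa [K.index_eq_card]

theorem pCore_step {L : Type*} [Group L] [Finite L] {r : ℕ} (hr : r.Prime)
    (K : Subgroup L) (hq : K.index.Prime) (hqr : K.index ≤ r) :
    (pCore r K).map K.subtype ≤ pCore r L := by
  haveI : Fact r.Prime := ⟨hr⟩
  set D := K.normalCore with hD
  have hDK : D ≤ K := K.normalCore_le
  haveI hDn : D.Normal := K.normalCore_normal
  -- relindex D K divides (K.index - 1)!
  have h1 : D.relIndex K * K.index = D.index := Subgroup.relIndex_mul_index hDK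
  have h2 : D.index ∣ Nat.factorial K.index := normalCore_index_dvd_factorial K
  have hq0 : 0 < K.index := hq.pos
  have hfac : Nat.factorial K.index = Nat.factorial (K.index - 1) * K.index := by
    obtain ⟨m, hm⟩ := Nat.exists_eq_succ_of_ne_zero hq0.ne'
    rw [hm]
    simp [Nat.factorial_succ, mul_comm]
  have hrel : D.relIndex K ∣ Nat.factorial (K.index - 1) := by
    have h3 : D.relIndex K * K.index ∣ Nat.factorial (K.index - 1) * K.index := by
      rw [h1, ← hfac]; exact h2
    exact (Nat.mul_dvd_mul_iff_right hq0).mp h3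
  have hnr : ¬ r ∣ D.relIndex K := by
    intro h
    have h4 : r ∣ Nat.factorial (K.index - 1) := h.trans hrel
    rw [Nat.Prime.dvd_factorial hr] at h4
    omega
  -- the pCore of K lies in D
  set P' := pCore r K with hP'
  have hP'p : IsPGroup r P' := pCore_isPGroup r K
  have hP'n : P'.Normal := pCore_normal r K
  haveI : (D.subgroupOf K).Normal := hDn.subgroupOf K
  set f := QuotientGroup.mk' (D.subgroupOf K) with hf
  obtain ⟨n, hn⟩ := (hP'p.map f).exists_card_eq
  have hdvd2 : Nat.card (P'.map f) ∣ Nat.card (K ⧸ D.subgroupOf K) :=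
    Subgroup.card_subgroup_dvd_card _
  have hcardQ : Nat.card (K ⧸ D.subgroupOf K) = D.relIndex K :=
    ((D.subgroupOf K).index_eq_card).symm
  have hn0 : n = 0 := by
    by_contra hne
    exact hnr (dvd_trans (dvd_trans (dvd_pow_self r hne) (hn ▸ hdvd2)) hcardQ.dvd)
  have hbot : P'.map f = ⊥ := by
    rw [← Subgroup.card_eq_one]
    rw [hn, hn0, pow_zero]
  have hle : P' ≤ D.subgroupOf K := by
    have := (Subgroup.map_eq_bot_iff P').mp hbot
    rwa [hf, QuotientGroup.ker_mk'] at this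
  set P := P'.map K.subtype with hPdef
  have hPD : P ≤ D := by
    have := Subgroup.map_mono (f := K.subtype) hle
    rwa [Subgroup.subgroupOf_map_subtype, inf_eq_left.mpr hDK] at this
  have hPp : IsPGroup r P := hP'p.map _
  have hPn' : ∀ k : L, k ∈ K → ∀ x ∈ P, k * x * k⁻¹ ∈ P := by
    intro k hk x hx
    obtain ⟨p, hp, rfl⟩ := hx
    exact ⟨⟨k, hk⟩ * p * ⟨k, hk⟩⁻¹, hP'n.conj_mem p hp ⟨k, hk⟩, rfl⟩
  have hPDn : (P.subgroupOf D).Normal := by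
    constructor
    intro x hx d
    rw [Subgroup.mem_subgroupOf] at hx ⊢
    have hdK : (↑d : L) ∈ K := hDK d.2
    simpa using hPn' (↑d) hdK (↑x) hx
  have hPDp : IsPGroup r (P.subgroupOf D) :=
    hPp.of_equiv (Subgroup.subgroupOfEquivOfLe hPD).symm
  have hfin : P.subgroupOf D ≤ pCore r D := le_pCore hPDn hPDp
  calc P = (P.subgroupOf D).map D.subtype := by
          rw [Subgroup.subgroupOf_map_subtype, inf_eq_left.mpr hPD]
    _ ≤ (pCore r D).map D.subtype := Subgroup.map_mono hfin
    _ ≤ pCore r L := pCore_map_subtype_le_of_normal D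

theorem pCore_map_le_step {G : Type*} [Group G] [Finite G] {r : ℕ} (hr : r.Prime)
    {K M : Subgroup G} (hKM : K ≤ M)
    (h : (K.relIndex M).Prime ∧ K.relIndex M ≤ r ∨ K.relIndex M = 1) :
    (pCore r K).map K.subtype ≤ (pCore r M).map M.subtype := by
  rcases h with ⟨hp, hpr⟩ | h1
  · have hstep := pCore_step hr (K.subgroupOf M) hp hpr
    let e := Subgroup.subgroupOfEquivOfLe hKM
    have h1 : (pCore r (K.subgroupOf M)).map e.toMonoidHom = pCore r K := pCore_map_equiv e
    have hcomp : K.subtype.comp e.toMonoidHom = M.subtype.comp (K.subgroupOf M).subtype := by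
      ext x
      simp [e, Subgroup.subgroupOfEquivOfLe]
    rw [← h1, Subgroup.map_map, hcomp, ← Subgroup.map_map]
    exact Subgroup.map_mono hstep
  · have : K.subgroupOf M = ⊤ := Subgroup.index_eq_one.mp h1
    have hMK : M ≤ K := by
      intro m hm
      have : (⟨m, hm⟩ : M) ∈ K.subgroupOf M := this ▸ Subgroup.mem_top _
      exact this
    have : K = M := le_antisymm hKM hMK
    subst this
    exact le_rfl

theorem pCore_top_map {G : Type*} [Group G] {r : ℕ} :
    (pCore r (⊤ : Subgroup G)).map (⊤ : Subgroup G).subtype = pCore r G := by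
  have h : (⊤ : Subgroup G).subtype = (Subgroup.topEquiv (G := G)).toMonoidHom := by
    ext x; rfl
  rw [h, pCore_map_equiv]

end PCoreAux

/-- If `H` is a ℙ-subnormal subgroup of a finite group `G` and `r` is the largest
prime dividing `|G|`, then `O_r(H) ≤ O_r(G)`. -/
theorem statement_10 {G : Type*} [Group G] [Finite G]
    {H : Subgroup G} (hH : IsPSubnormal H)
    {r : ℕ} (hr : r.Prime) (hdvd : r ∣ Nat.card G)
    (hmax : ∀ s : ℕ, s.Prime → s ∣ Nat.card G → s ≤ r) :
    (pCore r H).map H.subtype ≤ pCore r G := by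
  obtain ⟨n, c, hc0, hcn, hchain⟩ := hH
  have key : ∀ i, i ≤ n →
      (pCore r (c 0)).map (c 0).subtype ≤ (pCore r (c i)).map (c i).subtype := by
    intro i
    induction i with
    | zero => intro _; exact le_rfl
    | succ k ih =>
      intro hk
      obtain ⟨hle, hp⟩ := hchain k (by omega)
      refine (ih (by omega)).trans (pCore_map_le_step hr hle ?_)
      rcases hp with hp | hp
      · left
        refine ⟨hp, hmax _ hp ?_⟩
        exact dvd_trans (Subgroup.index_dvd_card (H := (c k).subgroupOf (c (k+1))))
          (Subgroup.card_subgroup_dvd_card (c (k+1)))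
      · right; exact hp
  have hfinal := key n le_rfl
  rw [hc0, hcn] at hfinal
  rwa [pCore_top_map] at hfinal
end

section
/- Let N be a normal subgroup of a finite group G and let H be a subgroup of G with N ≤ H. Then H is strongly permutable in G if and only if H/N is strongly permutable in G/N. -/
open Subgroup
open scoped Pointwise MatrixGroups

section Aux
variable {G G' : Type*} [Group G] [Group G']

lemma preimage_image_eq_mul_ker (f : G →* G') (A : Set G) :
    f ⁻¹' (f '' A) = A * (f.ker : Set G) := by
  ext g
  simp only [Set.mem_preimage, Set.mem_image, Set.mem_mul, SetLike.mem_coe,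
    MonoidHom.mem_ker]
  constructor
  · rintro ⟨a, ha, hfa⟩
    exact ⟨a, ha, a⁻¹ * g, by rw [map_mul, map_inv, hfa, inv_mul_cancel], by group⟩
  · rintro ⟨a, ha, k, hk, rfl⟩
    exact ⟨a, ha, by rw [map_mul, hk, mul_one]⟩

lemma normal_set_comm (K : Subgroup G) [K.Normal] (A : Set G) :
    A * (K : Set G) = (K : Set G) * A := by
  ext g
  simp only [Set.mem_mul, SetLike.mem_coe]
  constructor
  · rintro ⟨a, ha, k, hk, rfl⟩
    exact ⟨a * k * a⁻¹, Subgroup.Normal.conj_mem ‹K.Normal› k hk a, a, ha, by group⟩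
  · rintro ⟨k, hk, a, ha, rfl⟩
    exact ⟨a, ha, a⁻¹ * k * a, Subgroup.Normal.conj_mem' ‹K.Normal› k hk a, by group⟩

lemma set_mul_subgroup_of_le {K H : Subgroup G} (h : K ≤ H) :
    (H : Set G) * (K : Set G) = (H : Set G) := by
  apply le_antisymm
  · rintro g ⟨a, ha, k, hk, rfl⟩
    exact mul_mem ha (h hk)
  · intro g hg
    exact ⟨g, hg, 1, one_mem K, mul_one g⟩

lemma subgroup_mul_set_of_le {K H : Subgroup G} (h : K ≤ H) :
    (K : Set G) * (H : Set G) = (H : Set G) := by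
  apply le_antisymm
  · rintro g ⟨k, hk, a, ha, rfl⟩
    exact mul_mem (h hk) ha
  · intro g hg
    exact ⟨1, one_mem K, g, hg, one_mul g⟩

lemma le_permutizer (H : Subgroup G) : H ≤ permutizer H := by
  intro h hh
  apply Subgroup.subset_closure
  have h1 : zpowers h ≤ H := (zpowers_le).2 hh
  show (zpowers h : Set G) * H = (H : Set G) * zpowers h
  rw [set_mul_subgroup_of_le h1, subgroup_mul_set_of_le h1]

lemma permutizer_map (f : G →* G') (hf : Function.Surjective f)
    (H : Subgroup G) (hker : f.ker ≤ H) :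
    permutizer (H.map f) = (permutizer H).map f := by
  unfold permutizer
  rw [MonoidHom.map_closure]
  congr 1
  ext y
  simp only [Set.mem_image, Set.mem_setOf_eq]
  have key : ∀ x : G, f '' ((zpowers x : Set G) * H) = (zpowers (f x) : Set G') * (H.map f : Set G') ∧
      f '' ((H : Set G) * zpowers x) = ((H.map f : Set G')) * zpowers (f x) := by
    intro x
    constructor
    · rw [Set.image_mul, ← Subgroup.coe_map, ← Subgroup.coe_map, MonoidHom.map_zpowers]
    · rw [Set.image_mul, ← Subgroup.coe_map, ← Subgroup.coe_map, MonoidHom.map_zpowers]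
  have hHker : (H : Set G) * (f.ker : Set G) = (H : Set G) := set_mul_subgroup_of_le hker
  constructor
  · intro hy
    obtain ⟨x, rfl⟩ := hf y
    refine ⟨x, ?_, rfl⟩
    have him : f '' ((zpowers x : Set G) * H) = f '' ((H : Set G) * zpowers x) := by
      rw [(key x).1, (key x).2, hy]
    have := congrArg (f ⁻¹' ·) him
    simp only [preimage_image_eq_mul_ker] at this
    calc (zpowers x : Set G) * H = (zpowers x : Set G) * H * f.ker := by
            rw [mul_assoc, hHker]
      _ = (H : Set G) * zpowers x * f.ker := this
      _ = (H : Set G) * (f.ker : Set G) * zpowers x := by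
            rw [mul_assoc, normal_set_comm f.ker (zpowers x : Set G), mul_assoc]
      _ = (H : Set G) * zpowers x := by rw [hHker]
  · rintro ⟨x, hx, rfl⟩
    rw [← (key x).1, ← (key x).2, hx]

lemma map_permutizer_top_iff (f : G →* G') (hf : Function.Surjective f)
    {K : Subgroup G} (hker : f.ker ≤ K) : K.map f = ⊤ ↔ K = ⊤ := by
  constructor
  · intro h
    have := congrArg (comap f) h
    rwa [Subgroup.comap_map_eq, sup_of_le_left hker, Subgroup.comap_top] at this
  · rintro rfl
    exact Subgroup.map_top_of_surjective f hf

lemma subgroupOf_iff (f : G →* G') (hf : Function.Surjective f)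
    (H U : Subgroup G) (hHU : H ≤ U) (hker : f.ker ≤ H) :
    permutizer (H.subgroupOf U) = ⊤ ↔
      permutizer ((H.map f).subgroupOf (U.map f)) = ⊤ := by
  set g : U →* (U.map f) := f.subgroupMap U with hg
  have hgsurj : Function.Surjective g := f.subgroupMap_surjective U
  have hgker : g.ker ≤ H.subgroupOf U := by
    intro u hu
    have : f u.1 = 1 := congrArg Subtype.val hu
    exact mem_subgroupOf.2 (hker this)
  have himg : (H.subgroupOf U).map g = (H.map f).subgroupOf (U.map f) := by
    ext ⟨y, hy⟩
    simp only [Subgroup.mem_map, mem_subgroupOf, Subtype.ext_iff]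
    constructor
    · rintro ⟨⟨u, hu⟩, huH, heq⟩
      exact ⟨u, huH, heq⟩
    · rintro ⟨h, hh, heq⟩
      exact ⟨⟨h, hHU hh⟩, hh, heq⟩
  rw [← himg, permutizer_map g hgsurj _ hgker,
    map_permutizer_top_iff g hgsurj (le_trans hgker (le_permutizer _))]

end Aux

/-- For `N ⊴ G` and `N ≤ H ≤ G`: `H` is strongly permutable in `G` iff `H/N` is
strongly permutable in `G/N`. -/
theorem statement_11 {G : Type*} [Group G] [Finite G]
    (N H : Subgroup G) [N.Normal] (hNH : N ≤ H) :
    IsStronglyPermutable H ↔ IsStronglyPermutable (H.map (QuotientGroup.mk' N)) := by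
  set f := QuotientGroup.mk' N with hf
  have hfsurj : Function.Surjective f := QuotientGroup.mk'_surjective N
  have hfker : f.ker ≤ H := by rw [QuotientGroup.ker_mk']; exact hNH
  constructor
  · intro hsp U' hU'
    set U := comap f U' with hU
    have hHU : H ≤ U := le_trans (le_comap_map f H) (comap_mono hU')
    have hmap : U.map f = U' := map_comap_eq_self_of_surjective hfsurj U'
    have := (subgroupOf_iff f hfsurj H U hHU hfker).1 (hsp U hHU)
    rwa [hmap] at this
  · intro hsp U hHU
    exact (subgroupOf_iff f hfsurj H U hHU hfker).2
      (hsp (U.map f) (Subgroup.map_mono hHU))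
end

section
/- Let G be a finite group, let r be the largest prime dividing the order of G, and let R be a Sylow r-subgroup of G. Then N_G(R) = P_G(R). In particular, if R is permutable in G, then R is normal in G. -/
open Subgroup
open scoped Pointwise MatrixGroups

section Helpers13
open Subgroup Set
open scoped Pointwise

namespace Perm13
universe u

variable {G : Type*} [Group G]

theorem coe_sup_of_comm (H K : Subgroup G)
    (h : (H : Set G) * (K : Set G) = (K : Set G) * (H : Set G)) :
    (↑(H ⊔ K) : Set G) = (H : Set G) * (K : Set G) := by
  rw [sup_eq_closure_mul]
  refine Set.Subset.antisymm (fun x hx => ?_) subset_closure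
  induction hx using closure_induction'' with
  | one => exact ⟨1, one_mem _, 1, one_mem _, mul_one 1⟩
  | mem x hx => exact hx
  | inv_mem x hx =>
      obtain ⟨a, ha, b, hb, rfl⟩ := hx
      have : (b⁻¹ * a⁻¹ : G) ∈ (K : Set G) * (H : Set G) :=
        ⟨b⁻¹, inv_mem hb, a⁻¹, inv_mem ha, rfl⟩
      rw [← h] at this
      simpa [mul_inv_rev] using this
  | mul a b _ _ hx hy =>
      obtain ⟨a1, ha1, b1, hb1, rfl⟩ := hx
      obtain ⟨a2, ha2, b2, hb2, rfl⟩ := hy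
      have : (b1 * a2 : G) ∈ (H : Set G) * (K : Set G) := by
        rw [h]; exact ⟨b1, hb1, a2, ha2, rfl⟩
      obtain ⟨a3, ha3, b3, hb3, he⟩ := this
      refine ⟨a1 * a3, mul_mem ha1 ha3, b3 * b2, mul_mem hb3 hb2, ?_⟩
      have he' : a3 * b3 = b1 * a2 := he
      show a1 * a3 * (b3 * b2) = a1 * b1 * (a2 * b2)
      rw [mul_assoc a1, ← mul_assoc a3, he']; group

instance isCyclic_zpowers (x : G) : IsCyclic ↥(zpowers x) :=
  ⟨⟨⟨x, mem_zpowers x⟩, fun a => by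
    obtain ⟨m, hm⟩ := a.2
    exact ⟨m, Subtype.ext (by simpa using hm)⟩⟩⟩

theorem exists_zpowers_eq {x : G} {D : Subgroup G} (hD : D ≤ zpowers x) :
    ∃ y : G, y ∈ D ∧ zpowers y = D := by
  have : IsCyclic ↥(D.subgroupOf (zpowers x)) := Subgroup.isCyclic _
  have hcD : IsCyclic ↥D :=
    isCyclic_of_surjective (Subgroup.subgroupOfEquivOfLe hD)
      (Subgroup.subgroupOfEquivOfLe hD).surjective
  obtain ⟨d, hd⟩ := hcD.exists_generator
  refine ⟨(d : G), d.2, le_antisymm (zpowers_le.mpr d.2) fun a ha => ?_⟩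
  obtain ⟨m, hm⟩ := hd ⟨a, ha⟩
  exact ⟨m, by simpa using congrArg Subtype.val hm⟩

theorem index_dvd_of_mul_eq_univ (C R' : Subgroup G)
    (h : (C : Set G) * (R' : Set G) = Set.univ) : R'.index ∣ Nat.card C := by
  classical
  let f : ↥C ⧸ (R'.subgroupOf C) → G ⧸ R' :=
    Quotient.map' (fun c => (c : G)) (fun a b hab => by
      rw [QuotientGroup.leftRel_apply] at hab ⊢
      simpa [Subgroup.mem_subgroupOf] using hab)
  have hf : Function.Bijective f := by
    constructor
    · refine Quotient.ind₂' fun a b hab => ?_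
      have h1 : ((a : G) : G ⧸ R') = ((b : G) : G ⧸ R') := hab
      have h2 : (a : G)⁻¹ * b ∈ R' := QuotientGroup.eq.mp h1
      exact Quotient.sound' (QuotientGroup.leftRel_apply.mpr
        (by simpa [Subgroup.mem_subgroupOf] using h2))
    · refine Quotient.ind' fun g => ?_
      have hg : g ∈ (C : Set G) * (R' : Set G) := h ▸ Set.mem_univ g
      obtain ⟨c, hc, ρ, hρ, rfl⟩ := hg
      refine ⟨QuotientGroup.mk ⟨c, hc⟩, ?_⟩
      show ((c : G) : G ⧸ R') = ((c * ρ : G) : G ⧸ R')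
      exact QuotientGroup.eq.mpr (by simpa using hρ)
  have h1 : R'.index = Nat.card (↥C ⧸ R'.subgroupOf C) := by
    rw [Subgroup.index]
    exact (Nat.card_congr (Equiv.ofBijective f hf)).symm
  rw [h1]
  exact ⟨Nat.card (R'.subgroupOf C), Subgroup.card_eq_card_quotient_mul_card_subgroup _⟩


theorem isCyclic_sylow_of_mul_eq_univ [Finite G] {q r : ℕ} (hq : q.Prime) (hr : r.Prime)
    (hne : q ≠ r) (R : Sylow r G) (x : G)
    (hx : ((zpowers x : Subgroup G) : Set G) * ((R : Subgroup G) : Set G) = Set.univ)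
    (Q : Sylow q G) : IsCyclic ↥(Q : Subgroup G) := by
  haveI : Fact q.Prime := ⟨hq⟩
  haveI : Fact r.Prime := ⟨hr⟩
  set C : Subgroup G := zpowers x with hC
  set a := (Nat.card G).factorization q with ha
  have hGpos : Nat.card G ≠ 0 := Nat.card_pos.ne'
  have hRcard := R.card_eq_multiplicity
  have hqaG : q ^ a ∣ Nat.card G := Nat.ordProj_dvd _ q
  have hmul : Nat.card ↥(R : Subgroup G) * (R : Subgroup G).index = Nat.card G :=
    Subgroup.card_mul_index _
  have hcop : Nat.Coprime (q ^ a) (Nat.card ↥(R : Subgroup G)) := by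
    rw [hRcard]
    exact ((Nat.coprime_primes hq hr).mpr hne).pow _ _
  have hdvd_index : q ^ a ∣ (R : Subgroup G).index :=
    hcop.dvd_of_dvd_mul_left (by rw [hmul]; exact hqaG)
  have hdvdC : q ^ a ∣ Nat.card ↥C :=
    hdvd_index.trans (index_dvd_of_mul_eq_univ C _ hx)
  have hCG : Nat.card ↥C ∣ Nat.card G := Subgroup.card_subgroup_dvd_card C
  have hCpos : Nat.card ↥C ≠ 0 := Nat.card_pos.ne'
  have hfact : (Nat.card ↥C).factorization q = a := by
    refine le_antisymm ?_ ?_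
    · rw [ha]
      exact (Nat.Prime.pow_dvd_iff_le_factorization hq hGpos).mp
        ((Nat.ordProj_dvd _ q).trans hCG)
    · exact (Nat.Prime.pow_dvd_iff_le_factorization hq hCpos).mp hdvdC
  let Q' : Sylow q ↥C := default
  have hQ'card : Nat.card ↥(Q' : Subgroup ↥C) = q ^ a := by
    rw [Q'.card_eq_multiplicity, hfact]
  let Q1 : Subgroup G := (Q' : Subgroup ↥C).map C.subtype
  let e1 : ↥(Q' : Subgroup ↥C) ≃* ↥Q1 :=
    Subgroup.equivMapOfInjective _ _ C.subtype_injective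
  have hQ1card : Nat.card ↥Q1 = q ^ (Nat.card G).factorization q := by
    rw [← Nat.card_congr e1.toEquiv, hQ'card, ha]
  let S : Sylow q G := Sylow.ofCard Q1 hQ1card
  have hcyc1 : IsCyclic ↥Q1 := isCyclic_of_surjective e1 e1.surjective
  obtain ⟨g, hg⟩ := MulAction.exists_smul_eq G S Q
  have hcoe : (Q : Subgroup G) = MulAut.conj g • (S : Subgroup G) := by
    rw [← hg, Sylow.coe_subgroup_smul]
  have hS : (S : Subgroup G) = Q1 := rfl
  have e2 : ↥Q1 ≃* ↥(Q : Subgroup G) := by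
    rw [hcoe, hS, Subgroup.pointwise_smul_def]
    exact (MulAut.conj g).subgroupMap Q1
  exact isCyclic_of_surjective e2 e2.surjective


theorem normalizer_le_centralizer_of_cyclic [Finite G] {q : ℕ} (hq : q.Prime)
    (hmin : ∀ s : ℕ, s.Prime → s ∣ Nat.card G → q ≤ s) (hqG : q ∣ Nat.card G)
    (Q : Sylow q G) (hcyc : IsCyclic ↥(Q : Subgroup G)) :
    Subgroup.normalizer ((Q : Subgroup G) : Set G) ≤ Subgroup.centralizer ((Q : Subgroup G) : Set G) := by
  haveI : Fact q.Prime := ⟨hq⟩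
  set N := Subgroup.normalizer ((Q : Subgroup G) : Set G) with hN
  let f := (Q : Subgroup G).normalizerMonoidHom
  set m := f.ker.index with hm
  -- m divides the cardinality of MulAut Q
  have hdvdAut : m ∣ Nat.card (MulAut ↥(Q : Subgroup G)) := by
    have : m = Nat.card (↥N ⧸ f.ker) := rfl
    rw [this, Nat.card_congr (QuotientGroup.quotientKerEquivRange f).toEquiv]
    exact Subgroup.card_subgroup_dvd_card f.range
  have hacard : Nat.card ↥(Q : Subgroup G) = q ^ (Nat.card G).factorization q :=
    Q.card_eq_multiplicity
  have hapos : 0 < (Nat.card G).factorization q :=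
    hq.factorization_pos_of_dvd Nat.card_pos.ne' hqG
  have htot : Nat.card (MulAut ↥(Q : Subgroup G))
      = q ^ ((Nat.card G).factorization q - 1) * (q - 1) := by
    rw [hcyc.card_mulAut, hacard, Nat.totient_prime_pow hq hapos]
  -- Q is contained in the kernel (Q is abelian)
  have hQC : (Q : Subgroup G) ≤ Subgroup.centralizer (Q : Subgroup G) := by
    haveI : IsMulCommutative ↥(Q : Subgroup G) := by
      letI := hcyc.commGroup
      exact ⟨⟨fun a b => mul_comm a b⟩⟩
    exact Subgroup.le_centralizer _
  have hker : f.ker = (Subgroup.centralizer ((Q : Subgroup G) : Set G)).subgroupOf N :=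
    Subgroup.normalizerMonoidHom_ker _
  have hQker : (Q : Subgroup G).subgroupOf N ≤ f.ker := by
    rw [hker]
    exact fun g hg => by
      rw [Subgroup.mem_subgroupOf] at hg ⊢
      exact hQC hg
  -- q does not divide m
  have hqm : ¬ q ∣ m := by
    intro hqm
    have hdvd : m ∣ ((Q : Subgroup G).subgroupOf N).index :=
      Subgroup.index_dvd_of_le hQker
    have : ((Q.subtype Subgroup.le_normalizer : Sylow q ↥N) : Subgroup ↥N).index
        = ((Q : Subgroup G).subgroupOf N).index := by
      rw [Sylow.coe_subtype]
    exact (Q.subtype Subgroup.le_normalizer).not_dvd_index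
      (this ▸ hqm.trans hdvd)
  -- every prime dividing m is ≥ q, but must divide q^(a-1)(q-1): contradiction unless m = 1
  have hm1 : m = 1 := by
    by_contra hne1
    have hmpos : m ≠ 0 := Subgroup.index_ne_zero_of_finite
    set s := m.minFac with hs
    have hsp : s.Prime := Nat.minFac_prime hne1
    have hq2 := hq.two_le
    have hsm : s ∣ m := Nat.minFac_dvd m
    have hsG : s ∣ Nat.card G := by
      have h1 : m ∣ Nat.card ↥N := Subgroup.index_dvd_card _
      exact (hsm.trans h1).trans (Subgroup.card_subgroup_dvd_card N)
    have hqs : q ≤ s := hmin s hsp hsG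
    have : s ∣ q ^ ((Nat.card G).factorization q - 1) * (q - 1) :=
      hsm.trans (htot ▸ hdvdAut)
    rcases (Nat.Prime.dvd_mul hsp).mp this with h | h
    · have : s = q := (Nat.prime_dvd_prime_iff_eq hsp hq).mp (hsp.dvd_of_dvd_pow h)
      exact hqm (this ▸ hsm)
    · have : s ≤ q - 1 := Nat.le_of_dvd (by omega) h
      omega
  -- conclude
  have : f.ker = ⊤ := Subgroup.index_eq_one.mp hm1
  rw [hker] at this
  exact (Subgroup.subgroupOf_eq_top).mp this


theorem normal_of_sylow_max_prime (n : ℕ) :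
    ∀ {G : Type u} [Group G] [Finite G], Nat.card G ≤ n →
    ∀ {r : ℕ}, r.Prime → (∀ s : ℕ, s.Prime → s ∣ Nat.card G → s ≤ r) →
    ∀ (R : Sylow r G) (x : G),
      ((zpowers x : Subgroup G) : Set G) * ((R : Subgroup G) : Set G) = Set.univ →
      (R : Subgroup G).Normal := by
  induction n with
  | zero =>
    intro G _ _ hcard
    exact absurd hcard (by have := Nat.card_pos (α := G); omega)
  | succ n ih =>
    intro G _ _ hcard r hr hmax R x hx
    haveI : Fact r.Prime := ⟨hr⟩
    have hGpos : Nat.card G ≠ 0 := Nat.card_pos.ne'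
    by_cases hall : ∀ s : ℕ, s.Prime → s ∣ Nat.card G → s = r
    · -- G is an r-group, so R = ⊤
      have hcompl : Nat.card G / r ^ (Nat.card G).factorization r = 1 := by
        by_contra hne1
        have hpos : 0 < Nat.card G / r ^ (Nat.card G).factorization r :=
          Nat.ordCompl_pos r hGpos
        have hsp : (Nat.card G / r ^ (Nat.card G).factorization r).minFac.Prime :=
          Nat.minFac_prime hne1
        have hdvd : (Nat.card G / r ^ (Nat.card G).factorization r).minFac ∣ Nat.card G :=
          (Nat.minFac_dvd _).trans (Nat.ordCompl_dvd _ r)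
        have heq := hall _ hsp hdvd
        have hnd : ¬ r ∣ Nat.card G / r ^ (Nat.card G).factorization r :=
          Nat.not_dvd_ordCompl hr hGpos
        have hmd := Nat.minFac_dvd (Nat.card G / r ^ (Nat.card G).factorization r)
        rw [heq] at hmd
        exact hnd hmd
      have hcardG : Nat.card G = r ^ (Nat.card G).factorization r := by
        have h1 := Nat.ordProj_mul_ordCompl_eq_self (Nat.card G) r
        rw [hcompl, mul_one] at h1
        omega
      have hRtop : (R : Subgroup G) = ⊤ :=
        Subgroup.eq_top_of_card_eq _ (by rw [R.card_eq_multiplicity, ← hcardG])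
      rw [hRtop]
      infer_instance
    · push_neg at hall
      obtain ⟨q1, hq1p, hq1dvd, hq1ne⟩ := hall
      have hcardne1 : Nat.card G ≠ 1 := by
        intro h
        rw [h] at hq1dvd
        exact hq1p.one_lt.ne' (Nat.dvd_one.mp hq1dvd)
      set q0 := (Nat.card G).minFac with hq0
      have hq0p : q0.Prime := Nat.minFac_prime hcardne1
      haveI : Fact q0.Prime := ⟨hq0p⟩
      have hq0dvd : q0 ∣ Nat.card G := Nat.minFac_dvd _
      have hmin : ∀ s : ℕ, s.Prime → s ∣ Nat.card G → q0 ≤ s := fun s hs hd =>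
        Nat.minFac_le_of_dvd hs.two_le hd
      have hq0r : q0 ≠ r := by
        intro h
        have h1 := hmin q1 hq1p hq1dvd
        have h2 := hmax q1 hq1p hq1dvd
        omega
      let Q : Sylow q0 G := default
      have hcyc := isCyclic_sylow_of_mul_eq_univ hq0p hr hq0r R x hx Q
      have hNC := normalizer_le_centralizer_of_cyclic hq0p hmin hq0dvd Q hcyc
      set K := (MonoidHom.transferSylow Q hNC).ker with hK
      have hcompl := MonoidHom.ker_transferSylow_isComplement' Q hNC
      have hKindex : K.index = Nat.card ↥(Q : Subgroup G) := hcompl.symm.index_eq_card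
      -- R ≤ K
      have hRK : (R : Subgroup G) ≤ K := by
        intro g hg
        have h1 : orderOf ((g : G) : G ⧸ K) ∣ orderOf g :=
          orderOf_map_dvd (QuotientGroup.mk' K) g
        have h2 : orderOf g ∣ r ^ (Nat.card G).factorization r := by
          have h3 := orderOf_dvd_natCard (⟨g, hg⟩ : ↥(R : Subgroup G))
          rw [R.card_eq_multiplicity] at h3
          rwa [← Subgroup.orderOf_coe] at h3
        have h4 : orderOf ((g : G) : G ⧸ K) ∣ q0 ^ (Nat.card G).factorization q0 := by
          have h5 := orderOf_dvd_natCard ((g : G) : G ⧸ K)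
          have h6 : Nat.card (G ⧸ K) = q0 ^ (Nat.card G).factorization q0 := by
            rw [← Subgroup.index_eq_card, hKindex, Q.card_eq_multiplicity]
          rwa [h6] at h5
        have hcop : Nat.Coprime (r ^ (Nat.card G).factorization r)
            (q0 ^ (Nat.card G).factorization q0) :=
          ((Nat.coprime_primes hr hq0p).mpr (Ne.symm hq0r)).pow _ _
        have h7 : orderOf ((g : G) : G ⧸ K) = 1 :=
          Nat.eq_one_of_dvd_coprimes hcop (h1.trans h2) h4
        have h8 : ((g : G) : G ⧸ K) = 1 := by
          rwa [orderOf_eq_one_iff] at h7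
        exact (QuotientGroup.eq_one_iff g).mp h8
      -- the order of K is smaller
      have hq0a : 1 ≤ (Nat.card G).factorization q0 :=
        hq0p.factorization_pos_of_dvd hGpos hq0dvd
      have hKlt : Nat.card ↥K ≤ n := by
        have h1 : Nat.card ↥K * K.index = Nat.card G := Subgroup.card_mul_index K
        have h2 : 2 ≤ K.index := by
          rw [hKindex, Q.card_eq_multiplicity]
          calc 2 ≤ q0 := hq0p.two_le
          _ = q0 ^ 1 := (pow_one q0).symm
          _ ≤ q0 ^ (Nat.card G).factorization q0 :=
            Nat.pow_le_pow_right hq0p.pos hq0a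
        have h3 : 1 ≤ Nat.card ↥K := Nat.card_pos
        nlinarith [hcard]
      -- generator of K ⊓ zpowers x
      obtain ⟨y, hyD, hyz⟩ := exists_zpowers_eq (inf_le_right : K ⊓ zpowers x ≤ zpowers x)
      have hyK : y ∈ K := (Subgroup.mem_inf.mp hyD).1
      have hmaxK : ∀ s : ℕ, s.Prime → s ∣ Nat.card ↥K → s ≤ r := fun s hs hd =>
        hmax s hs (hd.trans (Subgroup.card_subgroup_dvd_card K))
      let RK : Sylow r ↥K := R.subtype hRK
      have hxK : ((zpowers (⟨y, hyK⟩ : ↥K) : Subgroup ↥K) : Set ↥K)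
          * ((RK : Subgroup ↥K) : Set ↥K) = Set.univ := by
        refine Set.eq_univ_of_forall fun k => ?_
        have hk : (k : G) ∈ ((zpowers x : Subgroup G) : Set G) * ((R : Subgroup G) : Set G) := by
          rw [hx]; trivial
        obtain ⟨c, hc, ρ, hρ, hkeq⟩ := hk
        have hcK : c ∈ K := by
          have hc' : c = (k : G) * ρ⁻¹ := by
            rw [← hkeq]; group
          rw [hc']
          exact mul_mem k.2 (inv_mem (hRK hρ))
        have hcD : c ∈ zpowers y := by
          rw [hyz]
          exact Subgroup.mem_inf.mpr ⟨hcK, hc⟩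
        obtain ⟨j, hj⟩ := hcD
        refine ⟨⟨c, hcK⟩, ⟨j, ?_⟩, ⟨ρ, hRK hρ⟩, ?_, ?_⟩
        · exact Subtype.ext (by simpa using hj)
        · show (⟨ρ, hRK hρ⟩ : ↥K) ∈ (RK : Subgroup ↥K)
          rw [Sylow.coe_subtype]
          exact Subgroup.mem_subgroupOf.mpr hρ
        · exact Subtype.ext hkeq
      have hnormK : (RK : Subgroup ↥K).Normal := ih hKlt hr hmaxK RK ⟨y, hyK⟩ hxK
      haveI hchar : (RK : Subgroup ↥K).Characteristic :=
        Sylow.characteristic_of_normal RK hnormK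
      have hnmap : ((RK : Subgroup ↥K).map K.subtype).Normal := inferInstance
      have hmapR : ((RK : Subgroup ↥K)).map K.subtype = (R : Subgroup G) := by
        rw [Sylow.coe_subtype, Subgroup.subgroupOf_map_subtype, inf_eq_left.mpr hRK]
      rwa [hmapR] at hnmap


end Perm13
end Helpers13

/-- If `r` is the largest prime dividing `|G|` and `R` is a Sylow `r`-subgroup of a
finite group `G`, then `N_G(R) = P_G(R)`; in particular, if `R` is permutable in `G`,
then `R` is normal in `G`. -/
theorem statement_13 {G : Type*} [Group G] [Finite G]
    {r : ℕ} (hr : r.Prime) (hdvd : r ∣ Nat.card G)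
    (hmax : ∀ s : ℕ, s.Prime → s ∣ Nat.card G → s ≤ r)
    (R : Sylow r G) :
    Subgroup.normalizer ((R : Subgroup G) : Set G) = permutizer (R : Subgroup G) ∧
      (IsPermutable (R : Subgroup G) → (R : Subgroup G).Normal) := by
  have key : ∀ x : G, (Subgroup.zpowers x : Set G) * ((R : Subgroup G) : Set G)
      = ((R : Subgroup G) : Set G) * (Subgroup.zpowers x : Set G) →
      x ∈ Subgroup.normalizer ((R : Subgroup G) : Set G) := by
    intro x hcomm
    set C : Subgroup G := zpowers x with hC
    set U : Subgroup G := C ⊔ (R : Subgroup G) with hUdef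
    have hUcoe : (↑U : Set G) = (C : Set G) * ((R : Subgroup G) : Set G) :=
      Perm13.coe_sup_of_comm _ _ hcomm
    have hxU : x ∈ U := (le_sup_left : C ≤ U) (mem_zpowers x)
    have hRU : (R : Subgroup G) ≤ U := le_sup_right
    let RU : Sylow r ↥U := R.subtype hRU
    have hmaxU : ∀ s : ℕ, s.Prime → s ∣ Nat.card ↥U → s ≤ r := fun s hs hd =>
      hmax s hs (hd.trans (Subgroup.card_subgroup_dvd_card U))
    have hxUmem : ((zpowers (⟨x, hxU⟩ : ↥U) : Subgroup ↥U) : Set ↥U)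
        * ((RU : Subgroup ↥U) : Set ↥U) = Set.univ := by
      refine Set.eq_univ_of_forall fun u => ?_
      have hu : (u : G) ∈ (C : Set G) * ((R : Subgroup G) : Set G) := by
        rw [← hUcoe]; exact u.2
      obtain ⟨c, hc, ρ, hρ, hueq⟩ := hu
      obtain ⟨m, hm⟩ := hc
      refine ⟨(⟨x, hxU⟩ : ↥U) ^ m, ⟨m, rfl⟩, ⟨ρ, hRU hρ⟩, ?_, ?_⟩
      · show (⟨ρ, hRU hρ⟩ : ↥U) ∈ (RU : Subgroup ↥U)
        rw [Sylow.coe_subtype]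
        exact Subgroup.mem_subgroupOf.mpr hρ
      · refine Subtype.ext ?_
        show ((⟨x, hxU⟩ : ↥U) ^ m : ↥U) * ρ = (u : G)
        have : (((⟨x, hxU⟩ : ↥U) ^ m : ↥U) : G) = x ^ m := by
          push_cast
          rfl
        rw [this]
        have hm' : x ^ m = c := hm
        rw [hm']
        exact hueq
    have hnorm : (RU : Subgroup ↥U).Normal :=
      Perm13.normal_of_sylow_max_prime (Nat.card ↥U) le_rfl hr hmaxU RU ⟨x, hxU⟩ hxUmem
    rw [Subgroup.mem_normalizer_iff]
    intro h
    constructor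
    · intro hh
      have h1 : (⟨h, hRU hh⟩ : ↥U) ∈ (RU : Subgroup ↥U) := by
        rw [Sylow.coe_subtype]
        exact Subgroup.mem_subgroupOf.mpr hh
      have h2 := hnorm.conj_mem _ h1 ⟨x, hxU⟩
      rw [Sylow.coe_subtype, Subgroup.mem_subgroupOf] at h2
      simpa using h2
    · intro hh
      have h1 : (⟨x * h * x⁻¹, hRU hh⟩ : ↥U) ∈ (RU : Subgroup ↥U) := by
        rw [Sylow.coe_subtype]
        exact Subgroup.mem_subgroupOf.mpr hh
      have h2 := hnorm.conj_mem _ h1 (⟨x, hxU⟩ : ↥U)⁻¹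
      rw [Sylow.coe_subtype, Subgroup.mem_subgroupOf] at h2
      have h3 : (((⟨x, hxU⟩ : ↥U)⁻¹ * ⟨x * h * x⁻¹, hRU hh⟩ * ((⟨x, hxU⟩ : ↥U)⁻¹)⁻¹ : ↥U) : G)
          = h := by
        push_cast
        group
      rwa [h3] at h2
  have hEq : Subgroup.normalizer ((R : Subgroup G) : Set G) = permutizer (R : Subgroup G) := by
    apply le_antisymm
    · intro x hxn
      apply Subgroup.subset_closure
      show (Subgroup.zpowers x : Set G) * ((R : Subgroup G) : Set G)
          = ((R : Subgroup G) : Set G) * (Subgroup.zpowers x : Set G)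
      have hz : zpowers x ≤ Subgroup.normalizer ((R : Subgroup G) : Set G) := zpowers_le.mpr hxn
      ext g
      constructor
      · rintro ⟨c, hc, ρ, hρ, rfl⟩
        have hcn := Subgroup.mem_normalizer_iff.mp (hz hc)
        exact ⟨c * ρ * c⁻¹, (hcn ρ).mp hρ, c, hc, by group⟩
      · rintro ⟨ρ, hρ, c, hc, rfl⟩
        have hcn := Subgroup.mem_normalizer_iff.mp (hz (inv_mem hc))
        refine ⟨c, hc, c⁻¹ * ρ * c, ?_, by group⟩
        have := (hcn ρ).mp hρ
        simp only [inv_inv] at this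
        exact this
    · exact (Subgroup.closure_le _).mpr fun x hx => key x hx
  refine ⟨hEq, fun hperm => ?_⟩
  have : Subgroup.normalizer ((R : Subgroup G) : Set G) = ⊤ := by
    rw [hEq]; exact hperm
  exact Subgroup.normalizer_eq_top_iff.mp this
end

section
/- Let H be a finite p-group of exponent p (every nontrivial element of H has order p) and let x ∈ H with x not in the center Z(H). Then N_H(⟨x⟩) = P_H(⟨x⟩), and ⟨x⟩ is not permutable in H. -/
open Subgroup
open scoped Pointwise MatrixGroups

private lemma mul_comm_of_mem_normalizer' {G : Type*} [Group G] {A : Subgroup G} {y : G}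
    (hy : y ∈ Subgroup.normalizer (A : Set G)) :
    (Subgroup.zpowers y : Set G) * (A : Set G) = (A : Set G) * (Subgroup.zpowers y : Set G) := by
  ext z
  constructor
  · rintro ⟨w, hw, a, ha, rfl⟩
    obtain ⟨k, rfl⟩ := hw
    refine ⟨y ^ k * a * (y ^ k)⁻¹, ?_, y ^ k, zpow_mem (mem_zpowers y) k, by group⟩
    exact (mem_normalizer_iff.mp (zpow_mem hy k) a).mp ha
  · rintro ⟨a, ha, w, hw, rfl⟩
    obtain ⟨k, rfl⟩ := hw
    refine ⟨y ^ k, zpow_mem (mem_zpowers y) k, (y ^ k)⁻¹ * a * y ^ k, ?_, by group⟩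
    exact (mem_normalizer_iff''.mp (zpow_mem hy k) a).mp ha

private lemma commute_of_perm' {H : Type*} [Group H] [Finite H] {p : ℕ} (hp : p.Prime)
    (hexp : ∀ h : H, h ≠ 1 → orderOf h = p) {x y : H}
    (h : (Subgroup.zpowers y : Set H) * (Subgroup.zpowers x : Set H)
       = (Subgroup.zpowers x : Set H) * (Subgroup.zpowers y : Set H)) :
    Commute x y := by
  haveI : Fact p.Prime := ⟨hp⟩
  set A := Subgroup.zpowers x with hA
  set B := Subgroup.zpowers y with hB
  have hAA : (A : Set H) * (A : Set H) = A := by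
    simpa using Submonoid.coe_mul_self_eq A.toSubmonoid
  have hBB : (B : Set H) * (B : Set H) = B := by
    simpa using Submonoid.coe_mul_self_eq B.toSubmonoid
  have hABAB : ((A : Set H) * B) * ((A : Set H) * B) = (A : Set H) * B := by
    calc ((A : Set H) * B) * ((A : Set H) * B)
        = (A : Set H) * (((B : Set H) * A) * B) := by
          simp only [mul_assoc]
      _ = (A : Set H) * ((A : Set H) * ((B : Set H) * B)) := by rw [h, mul_assoc]
      _ = ((A : Set H) * A) * ((B : Set H) * B) := by simp only [mul_assoc]
      _ = (A : Set H) * B := by rw [hAA, hBB]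
  have hinv : ((A : Set H) * B)⁻¹ = (A : Set H) * B := by
    rw [mul_inv_rev, inv_coe_set, inv_coe_set]
    exact h
  let K : Subgroup H :=
    { carrier := (A : Set H) * B
      one_mem' := ⟨1, one_mem A, 1, one_mem B, mul_one 1⟩
      mul_mem' := fun ha hb => by
        have := Set.mul_mem_mul ha hb; rwa [hABAB] at this
      inv_mem' := fun ha => by
        have : _⁻¹ ∈ ((A : Set H) * B)⁻¹ := Set.inv_mem_inv.mpr ha
        rwa [hinv] at this }
  have hxK : x ∈ K := ⟨x, mem_zpowers x, 1, one_mem B, mul_one x⟩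
  have hyK : y ∈ K := ⟨1, one_mem A, y, mem_zpowers y, one_mul y⟩
  have hordle : ∀ z : H, orderOf z ≤ p := by
    intro z
    by_cases hz : z = 1
    · simp [hz, hp.one_lt.le]
    · exact (hexp z hz).le
  have hcard : Nat.card K ≤ p ^ 2 := by
    have h1 : Nat.card K = Nat.card ((A : Set H) * (B : Set H) : Set H) := rfl
    have h2 := Set.natCard_mul_le (s := (A : Set H)) (t := (B : Set H))
    rw [h1]
    refine h2.trans ?_
    rw [SetLike.coe_sort_coe, SetLike.coe_sort_coe, hA, hB, Nat.card_zpowers, Nat.card_zpowers,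
      sq]
    exact Nat.mul_le_mul (hordle x) (hordle y)
  have hpg : IsPGroup p K := by
    intro g
    refine ⟨1, ?_⟩
    have : (g : H) ^ p = 1 := by
      by_cases hg : (g : H) = 1
      · simp [hg]
      · rw [← hexp _ hg]; exact pow_orderOf_eq_one _
    ext
    simpa using this
  obtain ⟨n, hn⟩ := IsPGroup.iff_card.mp hpg
  have hn2 : n ≤ 2 := by
    have : p ^ n ≤ p ^ 2 := hn ▸ hcard
    exact (Nat.pow_le_pow_iff_right hp.one_lt).mp this
  have hcomm : ∀ a b : K, a * b = b * a := by
    interval_cases n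
    · have : Nat.card K = 1 := by simpa using hn
      haveI : Subsingleton K := Nat.card_eq_one_iff_unique.mp this |>.1
      intro a b; exact Subsingleton.elim _ _
    · have hK : Nat.card K = p := by simpa using hn
      haveI : IsCyclic K := isCyclic_of_prime_card hK
      letI := IsCyclic.commGroup (α := K)
      intro a b; exact mul_comm a b
    · exact IsPGroup.commutative_of_card_eq_prime_sq hn
  have := hcomm ⟨x, hxK⟩ ⟨y, hyK⟩
  exact Subtype.ext_iff.mp this


/-- Let `H` be a finite `p`-group of exponent `p` (every nontrivial element has order
`p`) and let `x ∈ H` with `x ∉ Z(H)`. Then `N_H(⟨x⟩) = P_H(⟨x⟩)` and `⟨x⟩` is not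
permutable in `H`. -/
theorem statement_19 {H : Type*} [Group H] [Finite H]
    {p : ℕ} (hp : p.Prime) (hexp : ∀ h : H, h ≠ 1 → orderOf h = p)
    {x : H} (hx : x ∉ Subgroup.center H) :
    Subgroup.normalizer ((Subgroup.zpowers x : Subgroup H) : Set H) = permutizer (Subgroup.zpowers x) ∧
      ¬ IsPermutable (Subgroup.zpowers x) := by
  have hSC : {y : H | (Subgroup.zpowers y : Set H) * (Subgroup.zpowers x : Set H)
      = (Subgroup.zpowers x : Set H) * (Subgroup.zpowers y : Set H)}
      ⊆ (Subgroup.centralizer {x} : Set H) := by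
    intro y hy
    have hc : Commute x y := commute_of_perm' hp hexp hy
    rw [SetLike.mem_coe, Subgroup.mem_centralizer_iff]
    intro g hg
    rw [Set.mem_singleton_iff] at hg
    subst hg
    exact hc
  have h1 : permutizer (Subgroup.zpowers x) ≤ Subgroup.centralizer {x} :=
    (Subgroup.closure_le _).mpr hSC
  have h2 : Subgroup.centralizer {x} ≤ Subgroup.normalizer ((Subgroup.zpowers x : Subgroup H) : Set H) := by
    intro y hy
    have hc : Commute y x := (Subgroup.mem_centralizer_iff.mp hy x rfl).symm
    have key : ∀ h ∈ Subgroup.zpowers x, y * h * y⁻¹ = h := by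
      rintro h ⟨k, rfl⟩
      show y * x ^ k * y⁻¹ = x ^ k
      rw [(hc.zpow_right k).eq, mul_assoc, mul_inv_cancel, mul_one]
    have key' : ∀ h ∈ Subgroup.zpowers x, y⁻¹ * h * y = h := by
      rintro h ⟨k, rfl⟩
      show y⁻¹ * x ^ k * y = x ^ k
      rw [(hc.inv_left.zpow_right k).eq, mul_assoc, inv_mul_cancel, mul_one]
    rw [Subgroup.mem_normalizer_iff]
    intro h
    constructor
    · intro hh
      rw [key h hh]; exact hh
    · intro hh
      have heq : y⁻¹ * (y * h * y⁻¹) * y = y * h * y⁻¹ := key' _ hh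
      have : h = y * h * y⁻¹ := by
        conv_lhs => rw [show h = y⁻¹ * (y * h * y⁻¹) * y by group]
        rw [heq]
      rw [this]; exact hh
  have h3 : Subgroup.normalizer ((Subgroup.zpowers x : Subgroup H) : Set H) ≤ permutizer (Subgroup.zpowers x) :=
    fun y hy => Subgroup.subset_closure (mul_comm_of_mem_normalizer' hy)
  refine ⟨le_antisymm h3 (h1.trans h2), ?_⟩
  intro hper
  apply hx
  rw [Subgroup.mem_center_iff]
  intro g
  have hg : g ∈ Subgroup.centralizer {x} := h1 (hper ▸ Subgroup.mem_top g)
  exact (Subgroup.mem_centralizer_iff.mp hg x rfl).symm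
end
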